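/- There is no positive (10,7)-reverse multiple; that is, there is no positive integer M such that the reversal of the decimal digit expansion of M equals the decimal digit expansion of 7·M. -/

import Mathlib

lemma aux_lead_bounds {m d : ℕ} (hm : m ≠ 0)
    (hd : (Nat.digits 10 m).getLast? = some d) :
    d * 10 ^ ((Nat.digits 10 m).length - 1) ≤ m ∧
      m < (d + 1) * 10 ^ ((Nat.digits 10 m).length - 1) := by
  set L := Nat.digits 10 m with hL
  have hne : L ≠ [] := Nat.digits_ne_nil_iff_ne_zero.mpr hm
  have hsplit : L.dropLast ++ [d] = L := by
    have := List.dropLast_append_getLast hne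
    rw [List.getLast?_eq_getLast hne, Option.some_inj] at hd
    rwa [hd] at this
  have hm_eq : m = Nat.ofDigits 10 L.dropLast + 10 ^ L.dropLast.length * d := by
    conv_lhs => rw [← Nat.ofDigits_digits 10 m, ← hL, ← hsplit]
    rw [Nat.ofDigits_append, Nat.ofDigits_singleton]
  have hlen : L.dropLast.length = L.length - 1 := by
    simp [List.length_dropLast]
  have hX : Nat.ofDigits 10 L.dropLast < 10 ^ L.dropLast.length := by
    apply Nat.ofDigits_lt_base_pow_length (by norm_num)
    intro x hx
    exact Nat.digits_lt_base (by norm_num) (List.dropLast_subset L hx)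
  rw [hlen] at hm_eq hX
  rw [Nat.mul_comm] at hm_eq
  constructor
  · omega
  · rw [Nat.add_mul, Nat.one_mul]
    omega

theorem stmt_10 :
    ¬ ∃ M : ℕ, 0 < M ∧ (Nat.digits 10 M).reverse = Nat.digits 10 (7 * M) := by
  rintro ⟨M, hM, hrev⟩
  have hM0 : M ≠ 0 := hM.ne'
  have h7M0 : 7 * M ≠ 0 := by omega
  have hLM : Nat.digits 10 M = M % 10 :: Nat.digits 10 (M / 10) :=
    Nat.digits_def' (by norm_num) hM
  have hL7 : Nat.digits 10 (7 * M) = (7 * M) % 10 :: Nat.digits 10 ((7 * M) / 10) :=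
    Nat.digits_def' (by norm_num) (by omega)
  -- getLast? of digits M is 7M % 10
  have hgl : (Nat.digits 10 M).getLast? = some ((7 * M) % 10) := by
    rw [← List.head?_reverse, hrev, hL7]
    rfl
  -- getLast? of digits (7M) is M % 10
  have hgl7 : (Nat.digits 10 (7 * M)).getLast? = some (M % 10) := by
    rw [← hrev, List.getLast?_reverse, hLM]
    rfl
  have hlen : (Nat.digits 10 (7 * M)).length = (Nat.digits 10 M).length := by
    rw [← hrev, List.length_reverse]
  obtain ⟨h1, h2⟩ := aux_lead_bounds hM0 hgl
  obtain ⟨h3, h4⟩ := aux_lead_bounds h7M0 hgl7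
  rw [hlen] at h3 h4
  set P := 10 ^ ((Nat.digits 10 M).length - 1) with hP
  have hPpos : 0 < P := Nat.pow_pos (by norm_num)
  set d := (7 * M) % 10 with hd
  -- d ≠ 0 since it's the last digit
  have hdne : d ≠ 0 := by
    intro h0
    have := Nat.getLast_digit_ne_zero 10 hM0
    rw [List.getLast?_eq_getLast (Nat.digits_ne_nil_iff_ne_zero.mpr hM0), Option.some_inj] at hgl
    exact this (hgl.trans h0)
  have hd1 : d = 1 := by
    have hlt : 7 * (d * P) < 10 * P := by
      calc 7 * (d * P) ≤ 7 * M := by omega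
        _ < (M % 10 + 1) * P := h4
        _ ≤ 10 * P := by
            have : M % 10 + 1 ≤ 10 := by omega
            exact Nat.mul_le_mul_right P this
    have : 7 * d < 10 := by
      rw [← Nat.mul_assoc] at hlt
      exact Nat.lt_of_mul_lt_mul_right hlt
    omega
  have ha3 : M % 10 = 3 := by omega
  rw [hd1] at h1
  rw [ha3] at h4
  omega
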